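/- For 0 < α < 1/4 and 1/4 < β < 1/3, the octagon D₈(α) with vertices (-α,-3/2), (1-α,-3/2), (1+α,-1/2), (1-α,1/2) and their negatives, and the octagon D'₈(β') with vertices (2-β',-3), (-β',-3), (-2,-1), (-2,1) and their negatives, are related by invertible linear maps: for each α ∈ (0,1/4) there exists an invertible linear map σ : ℝ² → ℝ² and β' ∈ (0,1] such that σ(D₈(α)) = D'₈(β'). -/

import Mathlib

/-- The octagon `D₈(α)` with vertices `(-α,-3/2), (1-α,-3/2), (1+α,-1/2), (1-α,1/2)`
and their negatives. -/
noncomputable def D₈α (α : ℝ) : Set (ℝ × ℝ) :=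
  convexHull ℝ {(-α, -(3:ℝ)/2), (1 - α, -(3:ℝ)/2), (1 + α, -(1:ℝ)/2), (1 - α, (1:ℝ)/2),
    (α, (3:ℝ)/2), (α - 1, (3:ℝ)/2), (-1 - α, (1:ℝ)/2), (α - 1, -(1:ℝ)/2)}

/-- The octagon `D'₈(β)` with vertices `(2-β,-3), (-β,-3), (-2,-1), (-2,1)`
and their negatives. -/
noncomputable def D₈'β (β : ℝ) : Set (ℝ × ℝ) :=
  convexHull ℝ {(2 - β, -(3:ℝ)), (-β, -(3:ℝ)), (-(2:ℝ), -(1:ℝ)), (-(2:ℝ), (1:ℝ)),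
    (β - 2, (3:ℝ)), (β, (3:ℝ)), ((2:ℝ), (1:ℝ)), ((2:ℝ), -(1:ℝ))}

/-- A linear map on `ℝ × ℝ` given by a 2×2 matrix. -/
def lmap (a b c d : ℝ) : (ℝ × ℝ) →ₗ[ℝ] (ℝ × ℝ) where
  toFun p := (a * p.1 + b * p.2, c * p.1 + d * p.2)
  map_add' p q := by simp [Prod.ext_iff]; constructor <;> ring
  map_smul' r p := by simp [Prod.ext_iff]; constructor <;> ring

/-- The invertible linear map `(x, y) ↦ (a x + b y, 2 y)` for `a ≠ 0`. -/
noncomputable def lequiv (a b : ℝ) (ha : a ≠ 0) : (ℝ × ℝ) ≃ₗ[ℝ] (ℝ × ℝ) :=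
  LinearEquiv.ofLinear (lmap a b 0 2) (lmap (1/a) (-(b/(2*a))) 0 (1/2))
    (by ext p <;> simp [lmap] <;> field_simp <;> ring)
    (by ext p <;> simp [lmap] <;> field_simp <;> ring)

/-- For each `α ∈ (0, 1/4)` there is an invertible linear map carrying the octagon
`D₈(α)` onto an octagon `D'₈(β')` with `β' ∈ (0, 1]`. -/
theorem D₈α_linearly_equivalent_D₈'β (α : ℝ) (h0 : 0 < α) (h1 : α < 1/4) :
    ∃ (σ : (ℝ × ℝ) ≃ₗ[ℝ] (ℝ × ℝ)) (β' : ℝ), 0 < β' ∧ β' ≤ 1 ∧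
      σ '' D₈α α = D₈'β β' := by
  rcases le_or_gt α (1/8) with h | h
  · -- use `(x,y) ↦ (2x + 4αy, 2y)`, sending `D₈(α)` to `D'₈(8α)`
    refine ⟨lequiv 2 (4*α) (by norm_num), 8*α, by linarith, by linarith, ?_⟩
    have key : ⇑(lequiv 2 (4*α) (by norm_num)) = ⇑(lmap 2 (4*α) 0 2) := rfl
    rw [D₈α, key, LinearMap.image_convexHull, D₈'β]
    simp only [Set.image_insert_eq, Set.image_singleton, lmap, LinearMap.coe_mk, AddHom.coe_mk]
    ring_nf
    congr 1
    ext p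
    simp only [Set.mem_insert_iff, Set.mem_singleton_iff]
    tauto
  · -- use `(x,y) ↦ (-2x - 4αy, 2y)`, sending `D₈(α)` to `D'₈(2 - 8α)`
    refine ⟨lequiv (-2) (-(4*α)) (by norm_num), 2 - 8*α, by linarith, by linarith, ?_⟩
    have key : ⇑(lequiv (-2) (-(4*α)) (by norm_num)) = ⇑(lmap (-2) (-(4*α)) 0 2) := rfl
    rw [D₈α, key, LinearMap.image_convexHull, D₈'β]
    simp only [Set.image_insert_eq, Set.image_singleton, lmap, LinearMap.coe_mk, AddHom.coe_mk]
    ring_nf
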